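/- Let θ ∈ ℝ with sin θ ≠ 0, and let F : ℝ² → ℝ be a C² function satisfying cos θ·(F_xx + F_yy) + sin θ·(F_xx·F_yy − F_xy² − 1) = 0 everywhere. Define h(x,y) = cos θ·(x² + y²)/2 + sin θ·F(x,y). Then h satisfies the Monge–Ampère equation h_xx·h_yy − h_xy² = 1 everywhere on ℝ². -/

import Mathlib

noncomputable def pdx (u : ℝ → ℝ → ℝ) (x y : ℝ) : ℝ := deriv (fun t => u t y) x
noncomputable def pdy (u : ℝ → ℝ → ℝ) (x y : ℝ) : ℝ := deriv (fun t => u x t) y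

noncomputable def pxx (u : ℝ → ℝ → ℝ) : ℝ → ℝ → ℝ := pdx (pdx u)
noncomputable def pyy (u : ℝ → ℝ → ℝ) : ℝ → ℝ → ℝ := pdy (pdy u)
noncomputable def pxy (u : ℝ → ℝ → ℝ) : ℝ → ℝ → ℝ := pdy (pdx u)

def IsC2 (u : ℝ → ℝ → ℝ) : Prop := ContDiff ℝ 2 (Function.uncurry u)

def IsQuadratic (u : ℝ → ℝ → ℝ) : Prop :=
  ∃ a b c d e f : ℝ, ∀ x y : ℝ, u x y = a*x^2 + b*x*y + c*y^2 + d*x + e*y + f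

section aux

lemma hasDerivAt_left {G : ℝ × ℝ → ℝ} {x y : ℝ} (hG : DifferentiableAt ℝ G (x, y)) :
    HasDerivAt (fun t => G (t, y)) (fderiv ℝ G (x, y) (1, 0)) x := by
  have h1 : HasDerivAt (fun t : ℝ => (t, y)) ((1:ℝ), (0:ℝ)) x :=
    (hasDerivAt_id x).prodMk (hasDerivAt_const x y)
  exact hG.hasFDerivAt.comp_hasDerivAt x h1

lemma hasDerivAt_right {G : ℝ × ℝ → ℝ} {x y : ℝ} (hG : DifferentiableAt ℝ G (x, y)) :
    HasDerivAt (fun t => G (x, t)) (fderiv ℝ G (x, y) (0, 1)) y := by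
  have h1 : HasDerivAt (fun t : ℝ => (x, t)) ((0:ℝ), (1:ℝ)) y :=
    (hasDerivAt_const y x).prodMk (hasDerivAt_id y)
  exact hG.hasFDerivAt.comp_hasDerivAt y h1

lemma pdx_eq {F : ℝ → ℝ → ℝ} (hF : IsC2 F) (x y : ℝ) :
    pdx F x y = fderiv ℝ (Function.uncurry F) (x, y) (1, 0) := by
  have hd : DifferentiableAt ℝ (Function.uncurry F) (x, y) :=
    (hF.differentiable (by norm_num)).differentiableAt
  exact (hasDerivAt_left hd).deriv

lemma pdy_eq {F : ℝ → ℝ → ℝ} (hF : IsC2 F) (x y : ℝ) :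
    pdy F x y = fderiv ℝ (Function.uncurry F) (x, y) (0, 1) := by
  have hd : DifferentiableAt ℝ (Function.uncurry F) (x, y) :=
    (hF.differentiable (by norm_num)).differentiableAt
  exact (hasDerivAt_right hd).deriv

lemma P_contDiff {F : ℝ → ℝ → ℝ} (hF : IsC2 F) (v : ℝ × ℝ) :
    ContDiff ℝ 1 (fun p : ℝ × ℝ => fderiv ℝ (Function.uncurry F) p v) := by
  have h1 : ContDiff ℝ 1 (fderiv ℝ (Function.uncurry F)) :=
    hF.fderiv_right (by norm_num)
  exact h1.clm_apply contDiff_const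

end aux

theorem stmt_0 (θ : ℝ) (hθ : Real.sin θ ≠ 0) (F : ℝ → ℝ → ℝ) (hF : IsC2 F)
    (hSLE : ∀ x y : ℝ, Real.cos θ * (pxx F x y + pyy F x y) +
      Real.sin θ * (pxx F x y * pyy F x y - (pxy F x y)^2 - 1) = 0)
    (h : ℝ → ℝ → ℝ)
    (hdef : ∀ x y : ℝ, h x y = Real.cos θ * (x^2 + y^2) / 2 + Real.sin θ * F x y) :
    ∀ x y : ℝ, pxx h x y * pyy h x y - (pxy h x y)^2 = 1 := by
  set c := Real.cos θ
  set s := Real.sin θ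
  have hdiff : ∀ x y : ℝ, DifferentiableAt ℝ (Function.uncurry F) (x, y) :=
    fun x y => (hF.differentiable (by norm_num)).differentiableAt
  -- pdx h
  have hpdx : ∀ x y : ℝ, pdx h x y = c * x + s * pdx F x y := by
    intro x y
    have h1 : HasDerivAt (fun t : ℝ => c * (t^2 + y^2) / 2 + s * F t y)
        (c * x + s * pdx F x y) x := by
      have hq : HasDerivAt (fun t : ℝ => c * (t^2 + y^2) / 2) (c * x) x := by
        have : HasDerivAt (fun t : ℝ => t^2 + y^2) (2 * x) x := by
          simpa using ((hasDerivAt_pow 2 x).add_const (y^2))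
        have := (this.const_mul c).div_const 2
        exact this.congr_deriv (by ring)
      have hFx : HasDerivAt (fun t => F t y) (pdx F x y) x := by
        have := hasDerivAt_left (G := Function.uncurry F) (hdiff x y)
        rw [pdx_eq hF]
        exact this
      exact hq.add (hFx.const_mul s)
    have : (fun t => h t y) = fun t : ℝ => c * (t^2 + y^2) / 2 + s * F t y := by
      funext t; exact hdef t y
    rw [pdx, this]
    exact h1.deriv
  have hpdy : ∀ x y : ℝ, pdy h x y = c * y + s * pdy F x y := by
    intro x y
    have h1 : HasDerivAt (fun t : ℝ => c * (x^2 + t^2) / 2 + s * F x t)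
        (c * y + s * pdy F x y) y := by
      have hq : HasDerivAt (fun t : ℝ => c * (x^2 + t^2) / 2) (c * y) y := by
        have : HasDerivAt (fun t : ℝ => x^2 + t^2) (2 * y) y := by
          simpa using ((hasDerivAt_pow 2 y).const_add (x^2))
        have := (this.const_mul c).div_const 2
        exact this.congr_deriv (by ring)
      have hFy : HasDerivAt (fun t => F x t) (pdy F x y) y := by
        have := hasDerivAt_right (G := Function.uncurry F) (hdiff x y)
        rw [pdy_eq hF]
        exact this
      exact hq.add (hFy.const_mul s)
    have : (fun t => h x t) = fun t : ℝ => c * (x^2 + t^2) / 2 + s * F x t := by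
      funext t; exact hdef x t
    rw [pdy, this]
    exact h1.deriv
  -- differentiability of pdx F, pdy F slices
  have hPdxF : ∀ x y : ℝ, (fun p : ℝ × ℝ => pdx F p.1 p.2) =
      fun p : ℝ × ℝ => fderiv ℝ (Function.uncurry F) p (1, 0) := by
    intro x y; funext p; exact pdx_eq hF p.1 p.2
  intro x y
  have hP1 := P_contDiff hF (1, 0)
  have hP2 := P_contDiff hF (0, 1)
  -- pxx h
  have hxx : pxx h x y = c + s * pxx F x y := by
    have hFx : DifferentiableAt ℝ (fun t => pdx F t y) x := by
      have : (fun t => pdx F t y) =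
          (fun p : ℝ × ℝ => fderiv ℝ (Function.uncurry F) p (1, 0)) ∘ (fun t => (t, y)) := by
        funext t; exact pdx_eq hF t y
      rw [this]
      exact ((hP1.differentiable one_ne_zero).differentiableAt).comp x
        ((differentiableAt_id.prodMk (differentiableAt_const y)))
    have h1 : HasDerivAt (fun t => pdx h t y) (c + s * pxx F x y) x := by
      have : (fun t => pdx h t y) = fun t => c * t + s * pdx F t y := by
        funext t; exact hpdx t y
      rw [this]
      have hid : HasDerivAt (fun t : ℝ => c * t) c x := by
        simpa using (hasDerivAt_id x).const_mul c
      exact hid.add ((hFx.hasDerivAt).const_mul s)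
    have : pxx F x y = deriv (fun t => pdx F t y) x := rfl
    rw [pxx, pdx]
    exact h1.deriv
  have hyy : pyy h x y = c + s * pyy F x y := by
    have hFy : DifferentiableAt ℝ (fun t => pdy F x t) y := by
      have : (fun t => pdy F x t) =
          (fun p : ℝ × ℝ => fderiv ℝ (Function.uncurry F) p (0, 1)) ∘ (fun t => (x, t)) := by
        funext t; exact pdy_eq hF x t
      rw [this]
      exact ((hP2.differentiable one_ne_zero).differentiableAt).comp y
        ((differentiableAt_const x).prodMk differentiableAt_id)
    have h1 : HasDerivAt (fun t => pdy h x t) (c + s * pyy F x y) y := by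
      have : (fun t => pdy h x t) = fun t => c * t + s * pdy F x t := by
        funext t; exact hpdy x t
      rw [this]
      have hid : HasDerivAt (fun t : ℝ => c * t) c y := by
        simpa using (hasDerivAt_id y).const_mul c
      exact hid.add ((hFy.hasDerivAt).const_mul s)
    rw [pyy, pdy]
    exact h1.deriv
  have hxy : pxy h x y = s * pxy F x y := by
    have hFxy : DifferentiableAt ℝ (fun t => pdx F x t) y := by
      have : (fun t => pdx F x t) =
          (fun p : ℝ × ℝ => fderiv ℝ (Function.uncurry F) p (1, 0)) ∘ (fun t => (x, t)) := by
        funext t; exact pdx_eq hF x t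
      rw [this]
      exact ((hP1.differentiable one_ne_zero).differentiableAt).comp y
        ((differentiableAt_const x).prodMk differentiableAt_id)
    have h1 : HasDerivAt (fun t => pdx h x t) (s * pxy F x y) y := by
      have heq : (fun t => pdx h x t) = fun t => c * x + s * pdx F x t := by
        funext t; exact hpdx x t
      rw [heq]
      have := (hFxy.hasDerivAt).const_mul s
      simpa [pxy, pdy] using this.const_add (c * x)
    rw [pxy, pdy]
    exact h1.deriv
  rw [hxx, hyy, hxy]
  have hsle := hSLE x y
  have hpyth := Real.sin_sq_add_cos_sq θ
  linear_combination s * hsle + hpyth
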